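/- With notation as in the context: for every integer h ≥ 0, every sequence i₀, i₁, …, i_h of pairwise distinct elements of {1,…,n}, and all 1 ≤ s, t ≤ r with s ≠ t, the element e_{i₀}^s · e_{i_h}^t · e_{i₀ i₁} · e_{i₁ i₂} ⋯ e_{i_{h−1} i_h} lies in the two-sided ideal J (for h = 0 the product of the e_{i_k i_{k+1}} factors is empty and equals 1). -/

import Mathlib

noncomputable section

/-- The index type: the disjoint union of the set of 2-element subsets `{i,j}` of `{1,…,n}`
(encoded as non-diagonal elements of `Sym2 (Fin n)`) and the set `{1,…,n} × {1,…,r}`. -/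
abbrev OSIndex (n r : ℕ) : Type :=
  {p : Sym2 (Fin n) // ¬ p.IsDiag} ⊕ (Fin n × Fin r)

/-- The exterior algebra `Λ` on the free `R`-module with basis `OSIndex n r`. -/
abbrev OSAlgebra (R : Type) [CommRing R] (n r : ℕ) : Type :=
  ExteriorAlgebra R (OSIndex n r →₀ R)

variable (R : Type) [CommRing R] (n r : ℕ)

/-- The generator `e_{ij} = e_{ji}` attached to the pair `{i,j}` (for `i ≠ j`; the value at
`i = j` is junk and is never used below). -/
def eP (i j : Fin n) : OSAlgebra R n r :=
  if h : i = j then 0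
  else ExteriorAlgebra.ι R
    (Finsupp.single (Sum.inl ⟨s(i, j), fun hd => h (Sym2.mk_isDiag_iff.mp hd)⟩) 1)

/-- The generator `e_i^s` attached to `(i, s)`. -/
def eQ (i : Fin n) (s : Fin r) : OSAlgebra R n r :=
  ExteriorAlgebra.ι R (Finsupp.single (Sum.inr (i, s)) 1)

/-- The linear functional equal to `1` on every basis vector. -/
def osFunctional : Module.Dual R (OSIndex n r →₀ R) :=
  Finsupp.linearCombination R (fun _ => (1 : R))

/-- The left interior product (contraction) `∂` by the all-one functional. -/
def osContr : OSAlgebra R n r →ₗ[R] OSAlgebra R n r :=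
  CliffordAlgebra.contractLeft (osFunctional R n r)

/-- The two-sided ideal `J ⊆ Λ` generated by the Orlik–Solomon relations. -/
def osIdeal : TwoSidedIdeal (OSAlgebra R n r) :=
  TwoSidedIdeal.span
    ({x | ∃ i j k : Fin n, i ≠ j ∧ j ≠ k ∧ k ≠ i ∧
        x = eP R n r i j * eP R n r j k + eP R n r j k * eP R n r k i
          + eP R n r k i * eP R n r i j} ∪
     {x | ∃ (i j : Fin n) (s : Fin r), i ≠ j ∧
        x = eQ R n r i s * eQ R n r j s - eP R n r i j * eQ R n r i s
          + eP R n r i j * eQ R n r j s} ∪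
     {x | ∃ (i : Fin n) (s t : Fin r), s ≠ t ∧ x = eQ R n r i s * eQ R n r i t})

section Aux

variable {A : Type*} [Ring A]

theorem step_id (a P E qp ql : A) (h' : ℕ)
    (h1 : ql * P = ((-1 : ℤ) ^ h') • (P * ql)) (h2 : qp * P = ((-1 : ℤ) ^ h') • (P * qp))
    (h3 : ql * E = -(E * ql)) (h4 : qp * E = -(E * qp)) :
    a * ql * (P * E)
      = -(((-1 : ℤ) ^ h') • (a * P * (qp * ql - E * qp + E * ql)))
        + a * qp * P * ql + a * qp * P * E := by
  have H3 : ∀ x : A, x * ql * E = -(x * E * ql) := fun x => by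
    rw [mul_assoc, h3, mul_neg, mul_assoc]
  have H4 : ∀ x : A, x * qp * E = -(x * E * qp) := fun x => by
    rw [mul_assoc, h4, mul_neg, mul_assoc]
  rcases Nat.even_or_odd h' with he | ho
  · rw [he.neg_one_pow] at h1 h2 ⊢
    rw [one_smul]
    have H1 : ∀ x : A, x * ql * P = x * P * ql := fun x => by
      rw [mul_assoc, h1, one_smul, mul_assoc]
    have H2 : ∀ x : A, x * qp * P = x * P * qp := fun x => by
      rw [mul_assoc, h2, one_smul, mul_assoc]
    simp only [mul_sub, mul_add, ← mul_assoc, H1, H2, H3, H4, mul_neg, neg_mul]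
    abel
  · rw [ho.neg_one_pow] at h1 h2 ⊢
    rw [neg_one_zsmul]
    have H1 : ∀ x : A, x * ql * P = -(x * P * ql) := fun x => by
      rw [mul_assoc, h1, neg_one_zsmul, mul_neg, mul_assoc]
    have H2 : ∀ x : A, x * qp * P = -(x * P * qp) := fun x => by
      rw [mul_assoc, h2, neg_one_zsmul, mul_neg, mul_assoc]
    simp only [mul_sub, mul_add, ← mul_assoc, H1, H2, H3, H4, mul_neg, neg_mul, neg_neg]
    abel

end Aux

section Aux2

variable {R : Type} [CommRing R] {M : Type*} [AddCommGroup M] [Module R M]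

theorem ι_anticomm (x y : M) :
    ExteriorAlgebra.ι R x * ExteriorAlgebra.ι R y
      = -(ExteriorAlgebra.ι R y * ExteriorAlgebra.ι R x) := by
  rw [eq_neg_iff_add_eq_zero]
  exact ExteriorAlgebra.ι_add_mul_swap x y

theorem ι_mul_list_prod (v : M) :
    ∀ (xs : List (ExteriorAlgebra R M)),
      (∀ x ∈ xs, ∃ m : M, x = ExteriorAlgebra.ι R m) →
      ExteriorAlgebra.ι R v * xs.prod
        = ((-1 : ℤ) ^ xs.length) • (xs.prod * ExteriorAlgebra.ι R v)
  | [], _ => by simp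
  | x :: xs, hmem => by
    obtain ⟨m, rfl⟩ := hmem x List.mem_cons_self
    have IH := ι_mul_list_prod v xs (fun y hy => hmem y (List.mem_cons_of_mem _ hy))
    rw [List.prod_cons, ← mul_assoc, ι_anticomm v m, neg_mul, mul_assoc, IH,
      List.length_cons, pow_succ, mul_comm ((-1 : ℤ) ^ xs.length) (-1), mul_smul,
      neg_one_zsmul, mul_smul_comm, ← mul_assoc]

end Aux2

theorem eP_isι {i j : Fin n} (hij : i ≠ j) :
    ∃ m : OSIndex n r →₀ R, eP R n r i j = ExteriorAlgebra.ι R m :=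
  ⟨Finsupp.single (Sum.inl ⟨s(i, j), fun hd => hij (Sym2.mk_isDiag_iff.mp hd)⟩) 1,
    by rw [eP, dif_neg hij]⟩

/-- For every `h ≥ 0`, pairwise distinct `i₀, i₁, …, i_h ∈ {1,…,n}`, and all
`1 ≤ s, t ≤ r` with `s ≠ t`, the element `e_{i₀}^s · e_{i_h}^t · e_{i₀i₁} · e_{i₁i₂} ⋯
e_{i_{h−1}i_h}` lies in `J` (for `h = 0` the product of the `e_{i_k i_{k+1}}` factors is
empty, i.e. `1`). -/
theorem path_two_colors_mem_osIdeal
    (hn : 1 ≤ n) (hr : 1 ≤ r) (h : ℕ)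
    (idx : Fin (h + 1) → Fin n) (hinj : Function.Injective idx)
    (s t : Fin r) (hst : s ≠ t) :
    eQ R n r (idx 0) s * eQ R n r (idx (Fin.last h)) t *
        (List.ofFn fun k : Fin h => eP R n r (idx k.castSucc) (idx k.succ)).prod ∈
      osIdeal R n r := by
  clear hn hr
  induction h with
  | zero =>
      simp only [List.ofFn_zero, List.prod_nil, mul_one]
      refine TwoSidedIdeal.subset_span (Set.mem_union_right _ ?_)
      exact ⟨idx 0, s, t, hst, by rfl⟩
  | succ h IH =>
      have hinj' : Function.Injective (fun i : Fin (h + 1) => idx i.castSucc) :=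
        hinj.comp (Fin.castSucc_injective _)
      have IH' := IH (fun i : Fin (h + 1) => idx i.castSucc) hinj'
      set idx' : Fin (h + 1) → Fin n := fun i : Fin (h + 1) => idx i.castSucc with hidx'
      set p : Fin n := idx (Fin.last h).castSucc with hp
      set l : Fin n := idx (Fin.last (h + 1)) with hl
      have hpl : p ≠ l := fun e => absurd (hinj e) (Fin.castSucc_lt_last (Fin.last h)).ne
      obtain ⟨mE, hEeq⟩ := eP_isι R n r hpl
      set L : List (OSAlgebra R n r) :=
        List.ofFn fun k : Fin h => eP R n r (idx' k.castSucc) (idx' k.succ) with hLdef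
      have hL : ∀ x ∈ L, ∃ m : OSIndex n r →₀ R, x = ExteriorAlgebra.ι R m := by
        intro x hx
        rw [hLdef, List.mem_ofFn] at hx
        obtain ⟨k, hk⟩ := hx
        obtain ⟨m, hm⟩ := eP_isι R n r
          (fun e : idx' k.castSucc = idx' k.succ =>
            absurd (hinj' e) (Fin.castSucc_lt_succ : k.castSucc < k.succ).ne)
        exact ⟨m, by rw [← hk]; exact hm⟩
      have hlen : L.length = h := by rw [hLdef, List.length_ofFn]
      have h1 : eQ R n r l t * L.prod = ((-1 : ℤ) ^ h) • (L.prod * eQ R n r l t) := by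
        rw [← hlen]; exact ι_mul_list_prod _ L hL
      have h2 : eQ R n r p t * L.prod = ((-1 : ℤ) ^ h) • (L.prod * eQ R n r p t) := by
        rw [← hlen]; exact ι_mul_list_prod _ L hL
      have h3 : eQ R n r l t * eP R n r p l = -(eP R n r p l * eQ R n r l t) := by
        rw [hEeq]; exact ι_anticomm _ _
      have h4 : eQ R n r p t * eP R n r p l = -(eP R n r p l * eQ R n r p t) := by
        rw [hEeq]; exact ι_anticomm _ _
      have hsplit :
          (List.ofFn fun k : Fin (h + 1) => eP R n r (idx k.castSucc) (idx k.succ)).prod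
            = L.prod * eP R n r p l := by
        have ha : (List.ofFn fun i : Fin h =>
              eP R n r (idx i.castSucc.castSucc) (idx i.castSucc.succ)) = L := by
          rw [hLdef]
          exact congrArg List.ofFn (funext fun i => by
            show eP R n r (idx i.castSucc.castSucc) (idx i.castSucc.succ)
                = eP R n r (idx i.castSucc.castSucc) (idx i.succ.castSucc)
            rw [Fin.succ_castSucc])
        rw [List.ofFn_succ', List.concat_eq_append, List.prod_append, List.prod_cons,
          List.prod_nil, mul_one, Fin.succ_last, ← hp, ← hl, ha]
      rw [hsplit]
      have hIH : eQ R n r (idx 0) s * eQ R n r p t * L.prod ∈ osIdeal R n r := by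
        have e0 : idx' 0 = idx 0 := by
          show idx (Fin.castSucc 0) = idx 0
          rw [Fin.castSucc_zero]
        have e1 : idx' (Fin.last h) = p := rfl
        rwa [Fin.castSucc_zero] at IH'
      have key := step_id (eQ R n r (idx 0) s) L.prod (eP R n r p l)
        (eQ R n r p t) (eQ R n r l t) h h1 h2 h3 h4
      rw [key]
      refine (osIdeal R n r).add_mem ((osIdeal R n r).add_mem ?_ ?_) ?_
      · refine (osIdeal R n r).neg_mem ?_
        rw [zsmul_eq_mul]
        refine (osIdeal R n r).mul_mem_left _ _ ((osIdeal R n r).mul_mem_left _ _ ?_)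
        refine TwoSidedIdeal.subset_span
          (Set.mem_union_left _ (Set.mem_union_right _ ?_))
        exact ⟨p, l, t, hpl, rfl⟩
      · exact (osIdeal R n r).mul_mem_right _ _ hIH
      · exact (osIdeal R n r).mul_mem_right _ _ hIH
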